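/- arXiv:2005.13390 — 5 statements merged into one kernel-verified Lean document; each statement's English description precedes it below -/
import Mathlib

section
/- (Elman estimate for weighted GMRES; Theorem 5.6 of the paper.) Let D ∈ ℂ^{N×N} be Hermitian positive definite and let C ∈ ℂ^{N×N} be such that δ := dist(0, W_D(C)) > 0 (i.e. 0 ∉ W_D(C)). Then δ ≤ ‖C‖_D, and for every d ∈ ℂ^N, every initial guess x⁰ ∈ ℂ^N with initial residual r⁰ := C x⁰ − d, and every m ∈ ℕ, the m-th weighted GMRES residual satisfies min{ ‖C x − d‖_D : x ∈ x⁰ + K^m(C, r⁰) } ≤ (1 − (δ/‖C‖_D)²)^{m/2} · ‖r⁰‖_D; equivalently, with β ∈ [0, π/2) defined by cos β = δ/‖C‖_D, the m-th residual is at most (sin β)^m ‖r⁰‖_D. -/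
open scoped ComplexOrder

noncomputable section

/-- The Euclidean inner product on `ℂ^N`, linear in the first argument. -/
def inner2 {N : ℕ} (x y : Fin N → ℂ) : ℂ := ∑ i, x i * (starRingEnd ℂ) (y i)

/-- The weighted inner product `(x,y)_D := (D x, y)₂`. -/
def innerW {N : ℕ} (D : Matrix (Fin N) (Fin N) ℂ) (x y : Fin N → ℂ) : ℂ :=
  inner2 (D.mulVec x) y

/-- The weighted norm `‖x‖_D := (x,x)_D^{1/2}`. -/
def normW {N : ℕ} (D : Matrix (Fin N) (Fin N) ℂ) (x : Fin N → ℂ) : ℝ :=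
  Real.sqrt (innerW D x x).re

/-- The matrix norm induced by the weighted norm `‖·‖_D`. -/
def opNormW {N : ℕ} (D C : Matrix (Fin N) (Fin N) ℂ) : ℝ :=
  sSup {t : ℝ | ∃ x : Fin N → ℂ, x ≠ 0 ∧ t = normW D (C.mulVec x) / normW D x}

/-- The numerical range `W_D(C) := { (C x, x)_D : ‖x‖_D = 1 }`. -/
def numRange {N : ℕ} (D C : Matrix (Fin N) (Fin N) ℂ) : Set ℂ :=
  {z | ∃ x : Fin N → ℂ, normW D x = 1 ∧ z = innerW D (C.mulVec x) x}

/-- The `m`-th Krylov space `K^m(C,r) := span{C^j r : 0 ≤ j ≤ m-1}`. -/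
def krylov {N : ℕ} (C : Matrix (Fin N) (Fin N) ℂ) (r : Fin N → ℂ) (m : ℕ) :
    Submodule ℂ (Fin N → ℂ) :=
  Submodule.span ℂ {v | ∃ j < m, v = (C ^ j).mulVec r}

/-! ### Auxiliary lemmas -/

lemma inner2_eq {N : ℕ} (x y : Fin N → ℂ) :
    inner2 x y = @inner ℂ (EuclideanSpace ℂ (Fin N)) _
      ((WithLp.equiv 2 _).symm y) ((WithLp.equiv 2 _).symm x) := by
  simp [inner2, PiLp.inner_apply, RCLike.inner_apply, mul_comm]

lemma inner2_mulVec {N : ℕ} (M : Matrix (Fin N) (Fin N) ℂ) (u v : Fin N → ℂ) :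
    inner2 (M.mulVec u) v = inner2 u (M.conjTranspose.mulVec v) := by
  simp only [inner2, Matrix.mulVec, dotProduct, Matrix.conjTranspose_apply, map_sum,
    map_mul, Complex.conj_conj, Finset.sum_mul, Finset.mul_sum]
  rw [Finset.sum_comm]
  exact Finset.sum_congr rfl fun i _ => Finset.sum_congr rfl fun j _ => by
    rw [show ((starRingEnd ℂ) (star (M j i))) = M j i from star_star _]; ring

lemma WithLp.equiv_symm_smul {N : ℕ} (c : ℂ) (x : Fin N → ℂ) :
    (WithLp.equiv 2 (Fin N → ℂ)).symm (c • x) = c • (WithLp.equiv 2 (Fin N → ℂ)).symm x := rfl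

lemma WithLp.equiv_symm_sub {N : ℕ} (x y : Fin N → ℂ) :
    (WithLp.equiv 2 (Fin N → ℂ)).symm (x - y) =
      (WithLp.equiv 2 (Fin N → ℂ)).symm x - (WithLp.equiv 2 (Fin N → ℂ)).symm y := rfl

set_option maxHeartbeats 1000000 in
/-- **Elman estimate for weighted GMRES** (Theorem 5.6). -/
theorem elman_estimate_weighted_GMRES {N : ℕ} (hN : 1 ≤ N)
    (D C : Matrix (Fin N) (Fin N) ℂ) (hD : D.PosDef)
    (hδ : 0 < Metric.infDist (0 : ℂ) (numRange D C)) :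
    Metric.infDist (0 : ℂ) (numRange D C) ≤ opNormW D C ∧
    ∀ (d x0 : Fin N → ℂ) (m : ℕ),
      sInf {t : ℝ | ∃ x : Fin N → ℂ,
          x - x0 ∈ krylov C (C.mulVec x0 - d) m ∧ t = normW D (C.mulVec x - d)} ≤
        Real.sqrt (1 - (Metric.infDist (0 : ℂ) (numRange D C) / opNormW D C) ^ 2) ^ m *
          normW D (C.mulVec x0 - d) := by
  classical
  set δ := Metric.infDist (0 : ℂ) (numRange D C) with hδdef
  obtain ⟨S, hSh, hSS⟩ : ∃ S : Matrix (Fin N) (Fin N) ℂ, S.conjTranspose = S ∧ S * S = D := by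
    open scoped MatrixOrder in
    exact ⟨CFC.sqrt D, (Matrix.nonneg_iff_posSemidef.mp (CFC.sqrt_nonneg D)).1, CFC.sqrt_mul_sqrt_self D hD.posSemidef.nonneg⟩
  have hdet : IsUnit S.det := by
    have hD' : IsUnit D.det := (Matrix.isUnit_iff_isUnit_det D).mp hD.isUnit
    rw [← hSS, Matrix.det_mul] at hD'
    exact isUnit_of_mul_isUnit_left hD'
  have hinv : S⁻¹ * S = 1 := Matrix.nonsing_inv_mul S hdet
  -- weighted inner product via the square root of D
  have hIW : ∀ x y : Fin N → ℂ, innerW D x y = @inner ℂ (EuclideanSpace ℂ (Fin N)) _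
      ((WithLp.equiv 2 _).symm (S.mulVec y)) ((WithLp.equiv 2 _).symm (S.mulVec x)) := by
    intro x y
    rw [innerW, ← hSS, ← Matrix.mulVec_mulVec, inner2_mulVec, hSh, inner2_eq]
  have hNW : ∀ x : Fin N → ℂ,
      normW D x = ‖(WithLp.equiv 2 (Fin N → ℂ)).symm (S.mulVec x)‖ := by
    intro x
    rw [normW, hIW, ← RCLike.re_to_complex, inner_self_eq_norm_sq]
    exact Real.sqrt_sq (norm_nonneg _)
  have hNW0 : ∀ x : Fin N → ℂ, 0 ≤ normW D x := fun x => by rw [hNW]; exact norm_nonneg _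
  have hSi : ∀ x : Fin N → ℂ, S.mulVec x = 0 → x = 0 := by
    intro x hx
    have h1 : (S⁻¹ * S).mulVec x = S⁻¹.mulVec (S.mulVec x) := (Matrix.mulVec_mulVec _ _ _).symm
    rw [hinv, hx, Matrix.mulVec_zero, Matrix.one_mulVec] at h1
    exact h1
  have hNWpos : ∀ x : Fin N → ℂ, x ≠ 0 → 0 < normW D x := by
    intro x hx
    rw [hNW]
    have h1 : S.mulVec x ≠ 0 := fun h => hx (hSi x h)
    have h2 : (WithLp.equiv 2 (Fin N → ℂ)).symm (S.mulVec x) ≠ 0 := fun h =>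
      h1 (by simpa using congrArg (WithLp.equiv 2 (Fin N → ℂ)) h)
    exact norm_pos_iff.mpr h2
  have hNWz : normW D (0 : Fin N → ℂ) = 0 := by
    rw [hNW, Matrix.mulVec_zero]
    simp
  have hNWs : ∀ (c : ℂ) (x : Fin N → ℂ), normW D (c • x) = ‖c‖ * normW D x := by
    intro c x
    rw [hNW, hNW, Matrix.mulVec_smul, WithLp.equiv_symm_smul, norm_smul]
  -- operator norm facts
  set A := S * C * S⁻¹ with hA
  obtain ⟨T, hTφ⟩ : ∃ T : EuclideanSpace ℂ (Fin N) →L[ℂ] EuclideanSpace ℂ (Fin N),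
      ∀ v : Fin N → ℂ, T ((WithLp.equiv 2 (Fin N → ℂ)).symm v)
        = (WithLp.equiv 2 (Fin N → ℂ)).symm (A.mulVec v) := by
    refine ⟨LinearMap.toContinuousLinearMap (Matrix.toEuclideanLin A), fun v => ?_⟩
    simp
  have hAS : ∀ x : Fin N → ℂ, A.mulVec (S.mulVec x) = S.mulVec (C.mulVec x) := by
    intro x
    rw [Matrix.mulVec_mulVec, Matrix.mulVec_mulVec]
    congr 1
    rw [hA, Matrix.mul_assoc (S * C), hinv, Matrix.mul_one]
  have hCx : ∀ x : Fin N → ℂ,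
      normW D (C.mulVec x) = ‖T ((WithLp.equiv 2 (Fin N → ℂ)).symm (S.mulVec x))‖ := by
    intro x; rw [hNW, hTφ, hAS]
  have hbdd : BddAbove {t : ℝ | ∃ x : Fin N → ℂ, x ≠ 0 ∧ t = normW D (C.mulVec x) / normW D x} := by
    refine ⟨‖T‖, ?_⟩
    rintro t ⟨x, hx, rfl⟩
    rw [hCx, hNW]
    have hv : (0:ℝ) < ‖(WithLp.equiv 2 (Fin N → ℂ)).symm (S.mulVec x)‖ := by
      rw [← hNW]; exact hNWpos x hx
    rw [div_le_iff₀ hv]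
    exact T.le_opNorm _
  have hON : ∀ x : Fin N → ℂ, normW D (C.mulVec x) ≤ opNormW D C * normW D x := by
    intro x
    by_cases hx : x = 0
    · rw [hx, Matrix.mulVec_zero, hNWz, mul_zero]
    · have hmem : normW D (C.mulVec x) / normW D x ∈
          {t : ℝ | ∃ x : Fin N → ℂ, x ≠ 0 ∧ t = normW D (C.mulVec x) / normW D x} := ⟨x, hx, rfl⟩
      have := le_csSup hbdd hmem
      rw [div_le_iff₀ (hNWpos x hx)] at this
      exact this
  have hCS : ∀ x y : Fin N → ℂ, ‖innerW D x y‖ ≤ normW D x * normW D y := by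
    intro x y
    rw [hIW, hNW, hNW]
    exact (norm_inner_le_norm _ _).trans_eq (mul_comm _ _)
  -- distance to numerical range
  have hδle : ∀ r : Fin N → ℂ, r ≠ 0 → δ * normW D r ^ 2 ≤ ‖innerW D (C.mulVec r) r‖ := by
    intro r hr
    have hn : 0 < normW D r := hNWpos r hr
    set c : ℂ := ((normW D r : ℝ) : ℂ)⁻¹ with hc
    set u : Fin N → ℂ := c • r with hu
    have hcn : ‖c‖ = (normW D r)⁻¹ := by
      rw [hc, norm_inv, Complex.norm_real, Real.norm_eq_abs, abs_of_pos hn]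
    have hu1 : normW D u = 1 := by
      rw [hu, hNWs, hcn, inv_mul_cancel₀ hn.ne']
    have hz : innerW D (C.mulVec u) u ∈ numRange D C := ⟨u, hu1, rfl⟩
    have h1 : δ ≤ ‖innerW D (C.mulVec u) u‖ := by
      have := Metric.infDist_le_dist_of_mem (x := (0:ℂ)) hz
      rwa [dist_zero_left] at this
    have h2 : innerW D (C.mulVec u) u = c * (starRingEnd ℂ) c * innerW D (C.mulVec r) r := by
      rw [hu, Matrix.mulVec_smul, hIW, hIW, Matrix.mulVec_smul, Matrix.mulVec_smul,
        WithLp.equiv_symm_smul, WithLp.equiv_symm_smul, inner_smul_left, inner_smul_right]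
      ring
    have h3 : ‖innerW D (C.mulVec u) u‖ = (normW D r)⁻¹ ^ 2 * ‖innerW D (C.mulVec r) r‖ := by
      rw [h2, norm_mul, norm_mul, RCLike.norm_conj, hcn]
      ring
    rw [h3] at h1
    have := mul_le_mul_of_nonneg_left h1 (le_of_lt (pow_pos hn 2))
    calc δ * normW D r ^ 2 = normW D r ^ 2 * δ := by ring
      _ ≤ normW D r ^ 2 * ((normW D r)⁻¹ ^ 2 * ‖innerW D (C.mulVec r) r‖) := this
      _ = ‖innerW D (C.mulVec r) r‖ := by
          field_simp
  -- Part 1: δ ≤ opNormW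
  have part1 : δ ≤ opNormW D C := by
    have hr1 : (fun _ => (1:ℂ) : Fin N → ℂ) ≠ 0 := by
      intro h
      have := congrFun h ⟨0, hN⟩
      simpa using this
    set r : Fin N → ℂ := fun _ => 1 with hr
    have hn : 0 < normW D r := hNWpos r hr1
    have h1 : δ * normW D r ^ 2 ≤ ‖innerW D (C.mulVec r) r‖ := hδle r hr1
    have h2 : ‖innerW D (C.mulVec r) r‖ ≤ normW D (C.mulVec r) * normW D r := hCS _ _
    have h3 : normW D (C.mulVec r) ≤ opNormW D C * normW D r := hON r
    have h4 : δ * normW D r ^ 2 ≤ opNormW D C * normW D r ^ 2 := by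
      calc δ * normW D r ^ 2 ≤ ‖innerW D (C.mulVec r) r‖ := h1
        _ ≤ normW D (C.mulVec r) * normW D r := h2
        _ ≤ (opNormW D C * normW D r) * normW D r := mul_le_mul_of_nonneg_right h3 (hNW0 r)
        _ = opNormW D C * normW D r ^ 2 := by ring
    exact (mul_le_mul_iff_of_pos_right (pow_pos hn 2)).mp h4
  refine ⟨part1, ?_⟩
  have hM : 0 < opNormW D C := lt_of_lt_of_le hδ part1
  set M := opNormW D C with hMdef
  set q : ℝ := Real.sqrt (1 - (δ / M) ^ 2) with hq
  have hq0 : 0 ≤ q := Real.sqrt_nonneg _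
  have h1sub : 0 ≤ 1 - (δ / M) ^ 2 := by
    have h1 : δ / M ≤ 1 := (div_le_one hM).mpr part1
    have h2 : 0 ≤ δ / M := div_nonneg hδ.le hM.le
    nlinarith
  -- one-step contraction
  have step : ∀ r : Fin N → ℂ, ∃ α : ℂ,
      normW D (r - α • C.mulVec r) ≤ q * normW D r := by
    intro r
    by_cases hr : r = 0
    · refine ⟨0, ?_⟩
      rw [hr, zero_smul, sub_zero, hNWz]
      positivity
    · set v : EuclideanSpace ℂ (Fin N) := (WithLp.equiv 2 (Fin N → ℂ)).symm (S.mulVec r) with hv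
      set w : EuclideanSpace ℂ (Fin N) :=
        (WithLp.equiv 2 (Fin N → ℂ)).symm (S.mulVec (C.mulVec r)) with hw
      have hvn : normW D r = ‖v‖ := hNW r
      have hwn : normW D (C.mulVec r) = ‖w‖ := hNW _
      have hvpos : 0 < ‖v‖ := hvn ▸ hNWpos r hr
      set c : ℂ := @inner ℂ (EuclideanSpace ℂ (Fin N)) _ v w with hcdef
      have hcinner : innerW D (C.mulVec r) r = c := hIW _ _
      have hkey : δ * ‖v‖ ^ 2 ≤ ‖c‖ := by
        rw [← hcinner, ← hvn]; exact hδle r hr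
      have hcpos : 0 < ‖c‖ := lt_of_lt_of_le (by positivity) hkey
      have hwpos : 0 < ‖w‖ := by
        rcases eq_or_ne w 0 with h | h
        · exfalso
          rw [hcdef, h, inner_zero_right, norm_zero] at hcpos
          exact lt_irrefl 0 hcpos
        · exact norm_pos_iff.mpr h
      have hwle : ‖w‖ ≤ M * ‖v‖ := by
        rw [← hwn, ← hvn]; exact hON r
      set α : ℂ := (starRingEnd ℂ) c / ((‖w‖ ^ 2 : ℝ) : ℂ) with hα
      refine ⟨α, ?_⟩
      have heq : normW D (r - α • C.mulVec r) = ‖v - α • w‖ := by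
        rw [hNW, Matrix.mulVec_sub, Matrix.mulVec_smul, WithLp.equiv_symm_sub,
          WithLp.equiv_symm_smul, ← hv, ← hw]
      rw [heq]
      -- compute the squared norm
      have hinner : (@inner ℂ (EuclideanSpace ℂ (Fin N)) _ v (α • w))
          = ((‖c‖ ^ 2 / ‖w‖ ^ 2 : ℝ) : ℂ) := by
        rw [inner_smul_right, ← hcdef, hα]
        rw [div_mul_eq_mul_div, RCLike.conj_mul]
        push_cast
        norm_num
      have hαn : ‖α‖ = ‖c‖ / ‖w‖ ^ 2 := by
        rw [hα, norm_div, RCLike.norm_conj, Complex.norm_real, Real.norm_eq_abs,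
          abs_of_pos (by positivity : (0:ℝ) < ‖w‖ ^ 2)]
      have hns : ‖v - α • w‖ ^ 2 = ‖v‖ ^ 2 - ‖c‖ ^ 2 / ‖w‖ ^ 2 := by
        rw [@norm_sub_sq ℂ, hinner, norm_smul, hαn]
        simp only [RCLike.re_to_complex, Complex.ofReal_re]
        field_simp
        ring
      have hfrac : (δ / M) ^ 2 * ‖v‖ ^ 2 ≤ ‖c‖ ^ 2 / ‖w‖ ^ 2 := by
        have h1 : (δ * ‖v‖ ^ 2) ^ 2 ≤ ‖c‖ ^ 2 :=
          pow_le_pow_left₀ (by positivity) hkey 2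
        have h2 : ‖w‖ ^ 2 ≤ (M * ‖v‖) ^ 2 :=
          pow_le_pow_left₀ hwpos.le hwle 2
        have h3 : (δ * ‖v‖ ^ 2) ^ 2 / (M * ‖v‖) ^ 2 ≤ ‖c‖ ^ 2 / ‖w‖ ^ 2 :=
          div_le_div₀ (by positivity) h1 (by positivity) h2
        have h4 : (δ * ‖v‖ ^ 2) ^ 2 / (M * ‖v‖) ^ 2 = (δ / M) ^ 2 * ‖v‖ ^ 2 := by
          field_simp
        rw [← h4]; exact h3
      have hle2 : ‖v - α • w‖ ^ 2 ≤ (1 - (δ / M) ^ 2) * ‖v‖ ^ 2 := by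
        rw [hns]
        nlinarith
      calc ‖v - α • w‖ = Real.sqrt (‖v - α • w‖ ^ 2) := (Real.sqrt_sq (norm_nonneg _)).symm
        _ ≤ Real.sqrt ((1 - (δ / M) ^ 2) * ‖v‖ ^ 2) := Real.sqrt_le_sqrt hle2
        _ = q * ‖v‖ := by
            rw [Real.sqrt_mul h1sub, Real.sqrt_sq (norm_nonneg _), hq]
        _ = q * normW D r := by rw [hvn]
  -- Krylov space lemmas
  have hkry_mono : ∀ (r : Fin N → ℂ) (m : ℕ), krylov C r m ≤ krylov C r (m + 1) := by
    intro r m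
    apply Submodule.span_mono
    rintro v ⟨j, hj, hv⟩
    exact ⟨j, Nat.lt_succ_of_lt hj, hv⟩
  have hkry_C : ∀ (r : Fin N → ℂ) (m : ℕ) (v : Fin N → ℂ),
      v ∈ krylov C r m → C.mulVec v ∈ krylov C r (m + 1) := by
    intro r m v hv
    induction hv using Submodule.span_induction with
    | mem y hy =>
      obtain ⟨j, hj, rfl⟩ := hy
      apply Submodule.subset_span
      exact ⟨j + 1, Nat.succ_lt_succ hj, by rw [Matrix.mulVec_mulVec, ← pow_succ']⟩
    | zero => rw [Matrix.mulVec_zero]; exact Submodule.zero_mem _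
    | add y z hy hz ihy ihz => rw [Matrix.mulVec_add]; exact Submodule.add_mem _ ihy ihz
    | smul a y hy ihy => rw [Matrix.mulVec_smul]; exact Submodule.smul_mem _ a ihy
  have hkry_r0 : ∀ (r : Fin N → ℂ) (m : ℕ), r ∈ krylov C r (m + 1) := by
    intro r m
    apply Submodule.subset_span
    exact ⟨0, Nat.succ_pos m, by rw [pow_zero, Matrix.one_mulVec]⟩
  -- the main induction
  intro d x0 m
  set r0 : Fin N → ℂ := C.mulVec x0 - d with hr0
  have main : ∀ k : ℕ, ∃ x : Fin N → ℂ, x - x0 ∈ krylov C r0 k ∧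
      normW D (C.mulVec x - d) ≤ q ^ k * normW D r0 := by
    intro k
    induction k with
    | zero =>
      refine ⟨x0, ?_, ?_⟩
      · rw [sub_self]; exact Submodule.zero_mem _
      · rw [pow_zero, one_mul, ← hr0]
    | succ k ih =>
      obtain ⟨x, hxm, hxb⟩ := ih
      set r : Fin N → ℂ := C.mulVec x - d with hrdef
      obtain ⟨α, hα⟩ := step r
      refine ⟨x - α • r, ?_, ?_⟩
      · have hr_mem : r ∈ krylov C r0 (k + 1) := by
          have hrw : r = C.mulVec (x - x0) + r0 := by
            rw [hrdef, hr0, Matrix.mulVec_sub]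
            abel
          rw [hrw]
          exact Submodule.add_mem _ (hkry_C _ _ _ hxm) (hkry_r0 _ _)
        have hre : x - α • r - x0 = (x - x0) - α • r := sub_right_comm x (α • r) x0
        rw [hre]
        exact Submodule.sub_mem _ (hkry_mono _ _ hxm) (Submodule.smul_mem _ _ hr_mem)
      · have hre : C.mulVec (x - α • r) - d = r - α • C.mulVec r := by
          rw [Matrix.mulVec_sub, Matrix.mulVec_smul, sub_right_comm, ← hrdef]
        rw [hre]
        calc normW D (r - α • C.mulVec r) ≤ q * normW D r := hα
          _ ≤ q * (q ^ k * normW D r0) := by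
              apply mul_le_mul_of_nonneg_left hxb hq0
          _ = q ^ (k + 1) * normW D r0 := by ring
  obtain ⟨x, hx1, hx2⟩ := main m
  have hbb : BddBelow {t : ℝ | ∃ x : Fin N → ℂ,
      x - x0 ∈ krylov C (C.mulVec x0 - d) m ∧ t = normW D (C.mulVec x - d)} := by
    refine ⟨0, ?_⟩
    rintro t ⟨y, _, rfl⟩
    exact hNW0 _
  exact le_trans (csInf_le hbb ⟨x, hx1, rfl⟩) hx2
end
end

section
/- (One-step contraction lemma underlying the Elman estimate.) Let D ∈ ℂ^{N×N} be Hermitian positive definite and let C ∈ ℂ^{N×N} satisfy δ := dist(0, W_D(C)) > 0. Then for every x ∈ ℂ^N there exists γ ∈ ℂ such that ‖x − γ C x‖_D² ≤ (1 − (δ/‖C‖_D)²) · ‖x‖_D². -/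
open scoped ComplexOrder

noncomputable section

namespace Elman
variable {N : ℕ} (D : Matrix (Fin N) (Fin N) ℂ)

lemma innerW_eq_dot (x y : Fin N → ℂ) : innerW D x y = dotProduct (star y) (D.mulVec x) := by
  simp [innerW, inner2, dotProduct, mul_comm]

lemma innerW_self_re_pos (hD : D.PosDef) {x : Fin N → ℂ} (hx : x ≠ 0) :
    0 < (innerW D x x).re := by
  rw [innerW_eq_dot]
  exact hD.re_dotProduct_pos hx

lemma innerW_self_re_nonneg (hD : D.PosDef) (x : Fin N → ℂ) :
    0 ≤ (innerW D x x).re := by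
  rcases eq_or_ne x 0 with h | h
  · simp [h, innerW, inner2, Matrix.mulVec_zero]
  · exact (innerW_self_re_pos D hD h).le

lemma normW_sq (hD : D.PosDef) (x : Fin N → ℂ) :
    normW D x ^ 2 = (innerW D x x).re :=
  Real.sq_sqrt (innerW_self_re_nonneg D hD x)

lemma normW_pos (hD : D.PosDef) {x : Fin N → ℂ} (hx : x ≠ 0) : 0 < normW D x :=
  Real.sqrt_pos.mpr (innerW_self_re_pos D hD hx)

lemma innerW_smul_left (c : ℂ) (x y : Fin N → ℂ) :
    innerW D (c • x) y = c * innerW D x y := by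
  simp [innerW, inner2, Matrix.mulVec_smul, Finset.mul_sum, mul_assoc]

lemma innerW_smul_right (c : ℂ) (x y : Fin N → ℂ) :
    innerW D x (c • y) = (starRingEnd ℂ) c * innerW D x y := by
  simp only [innerW, inner2, Pi.smul_apply, smul_eq_mul, map_mul, Finset.mul_sum]
  exact Finset.sum_congr rfl fun i _ => by ring

lemma innerW_sub_left (x y z : Fin N → ℂ) :
    innerW D (x - y) z = innerW D x z - innerW D y z := by
  simp [innerW, inner2, Matrix.mulVec_sub, sub_mul, Finset.sum_sub_distrib]

lemma innerW_sub_right (x y z : Fin N → ℂ) :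
    innerW D x (y - z) = innerW D x y - innerW D x z := by
  simp [innerW, inner2, mul_sub, Finset.sum_sub_distrib]

lemma innerW_conj (hD : D.IsHermitian) (x y : Fin N → ℂ) :
    (starRingEnd ℂ) (innerW D x y) = innerW D y x := by
  simp only [innerW, inner2, Matrix.mulVec, dotProduct, Finset.sum_mul, map_sum, map_mul]
  rw [Finset.sum_comm]
  refine Finset.sum_congr rfl fun j _ => Finset.sum_congr rfl fun i _ => ?_
  have h : (starRingEnd ℂ) (D j i) = D i j := by
    have := congrFun (congrFun hD i) j
    simpa [Matrix.conjTranspose_apply] using this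
  rw [← h]; ring_nf
  simp [mul_comm, mul_left_comm]

lemma normW_smul (c : ℂ) (x : Fin N → ℂ) :
    normW D (c • x) = ‖c‖ * normW D x := by
  have h : innerW D (c • x) (c • x) = (Complex.normSq c : ℂ) * innerW D x x := by
    rw [innerW_smul_left, innerW_smul_right, ← mul_assoc, mul_comm c,
      ← Complex.normSq_eq_conj_mul_self]
  rw [normW, h, Complex.re_ofReal_mul, Real.sqrt_mul (Complex.normSq_nonneg c),
    ← Complex.norm_def, normW]

lemma continuous_mulVec (A : Matrix (Fin N) (Fin N) ℂ) :
    Continuous fun x : Fin N → ℂ => A.mulVec x := by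
  refine continuous_pi fun i => ?_
  simp only [Matrix.mulVec, dotProduct]
  exact continuous_finset_sum _ fun j _ => continuous_const.mul (continuous_apply j)

lemma continuous_normW : Continuous fun x : Fin N → ℂ => normW D x := by
  apply Real.continuous_sqrt.comp
  apply Complex.continuous_re.comp
  show Continuous fun x : Fin N → ℂ => innerW D x x
  simp only [innerW, inner2]
  refine continuous_finset_sum _ fun i _ => Continuous.mul ?_ ?_
  · exact (continuous_apply i).comp (continuous_mulVec D)
  · exact continuous_star.comp (continuous_apply i)

lemma exists_bound (hN : 1 ≤ N) (hD : D.PosDef) (C : Matrix (Fin N) (Fin N) ℂ) :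
    ∃ M : ℝ, ∀ x : Fin N → ℂ, x ≠ 0 → normW D (C.mulVec x) / normW D x ≤ M := by
  haveI : Nonempty (Fin N) := ⟨⟨0, hN⟩⟩
  have hsne : (Metric.sphere (0 : Fin N → ℂ) 1).Nonempty := by
    refine ⟨fun _ => 1, ?_⟩
    rw [mem_sphere_zero_iff_norm]
    simpa using (pi_norm_const (1 : ℂ))
  have hcont : ContinuousOn (fun x : Fin N → ℂ => normW D (C.mulVec x) / normW D x)
      (Metric.sphere (0 : Fin N → ℂ) 1) := by
    apply ContinuousOn.div
    · exact ((continuous_normW D).comp (continuous_mulVec C)).continuousOn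
    · exact (continuous_normW D).continuousOn
    · intro y hy
      have hy0 : y ≠ 0 := by
        rw [mem_sphere_zero_iff_norm] at hy
        intro h; rw [h] at hy; simp at hy
      exact (normW_pos D hD hy0).ne'
  obtain ⟨x₀, _, hx₀⟩ := (isCompact_sphere (0 : Fin N → ℂ) 1).exists_isMaxOn hsne hcont
  refine ⟨normW D (C.mulVec x₀) / normW D x₀, fun x hx => ?_⟩
  set c : ℂ := ((‖x‖ : ℝ) : ℂ)⁻¹ with hc
  have hxn : (0:ℝ) < ‖x‖ := norm_pos_iff.mpr hx
  have hc0 : c ≠ 0 := by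
    simp only [hc, ne_eq, inv_eq_zero, Complex.ofReal_eq_zero]
    exact hxn.ne'
  have hmem : c • x ∈ Metric.sphere (0 : Fin N → ℂ) 1 := by
    rw [mem_sphere_zero_iff_norm, norm_smul]
    simp [hc]
    field_simp
  have habs : ‖c‖ ≠ 0 := by
    simpa [map_eq_zero] using hc0
  have h2 : normW D (C.mulVec (c • x)) / normW D (c • x)
      ≤ normW D (C.mulVec x₀) / normW D x₀ := hx₀ hmem
  rw [Matrix.mulVec_smul, normW_smul, normW_smul,
    mul_div_mul_left _ _ habs] at h2
  exact h2

end Elman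

/-- **One-step contraction lemma** underlying the Elman estimate. -/
theorem one_step_contraction {N : ℕ} (hN : 1 ≤ N)
    (D C : Matrix (Fin N) (Fin N) ℂ) (hD : D.PosDef)
    (hδ : 0 < Metric.infDist (0 : ℂ) (numRange D C)) :
    ∀ x : Fin N → ℂ, ∃ γ : ℂ,
      normW D (x - γ • C.mulVec x) ^ 2 ≤
        (1 - (Metric.infDist (0 : ℂ) (numRange D C) / opNormW D C) ^ 2) *
          normW D x ^ 2 := by
    open Elman in
  intro x
  set δ := Metric.infDist (0 : ℂ) (numRange D C) with hδdef
  set K := opNormW D C with hKdef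
  rcases eq_or_ne x 0 with rfl | hx
  · refine ⟨0, ?_⟩
    simp [normW, innerW, inner2, Matrix.mulVec_zero]
  -- notation
  set y := C.mulVec x with hydef
  set n := (innerW D x x).re with hndef
  have hn : 0 < n := innerW_self_re_pos D hD hx
  have hsn : 0 < Real.sqrt n := Real.sqrt_pos.mpr hn
  set u := (((Real.sqrt n)⁻¹ : ℝ) : ℂ) • x with hudef
  have hnx : normW D x = Real.sqrt n := rfl
  have hu : normW D u = 1 := by
    rw [hudef, normW_smul, hnx, Complex.norm_real, Real.norm_eq_abs, abs_of_pos (inv_pos.mpr hsn),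
      inv_mul_cancel₀ hsn.ne']
  set a := innerW D y x with hadef
  have hz : innerW D (C.mulVec u) u = ((n⁻¹ : ℝ) : ℂ) * a := by
    have h4 : ((Real.sqrt n)⁻¹ : ℝ) * (Real.sqrt n)⁻¹ = n⁻¹ := by
      rw [← mul_inv, Real.mul_self_sqrt hn.le]
    rw [hudef, Matrix.mulVec_smul, innerW_smul_left, innerW_smul_right, Complex.conj_ofReal,
      ← hydef, ← hadef, ← mul_assoc, ← Complex.ofReal_mul, h4]
  have hmem : innerW D (C.mulVec u) u ∈ numRange D C := ⟨u, hu, rfl⟩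
  have hδa : δ * n ≤ ‖a‖ := by
    have h1 : δ ≤ ‖innerW D (C.mulVec u) u‖ := by
      have h2 := Metric.infDist_le_dist_of_mem (x := (0:ℂ)) hmem
      rwa [dist_zero_left] at h2
    rw [hz, norm_mul, Complex.norm_real, Real.norm_eq_abs, abs_of_pos (inv_pos.mpr hn),
      inv_mul_eq_div] at h1
    exact (le_div_iff₀ hn).mp h1
  have hCx : y ≠ 0 := by
    intro h
    have ha0 : a = 0 := by simp [hadef, h, innerW, inner2, Matrix.mulVec_zero]
    rw [ha0] at hδa
    simp at hδa
    nlinarith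
  set b := (innerW D y y).re with hbdef
  have hb : 0 < b := innerW_self_re_pos D hD hCx
  obtain ⟨M, hM⟩ := exists_bound D hN hD C
  have hbdd : BddAbove {t : ℝ | ∃ x : Fin N → ℂ, x ≠ 0 ∧ t = normW D (C.mulVec x) / normW D x} := by
    refine ⟨M, fun t ht => ?_⟩
    obtain ⟨z, hz0, rfl⟩ := ht
    exact hM z hz0
  have hfK : normW D y / normW D x ≤ K := le_csSup hbdd ⟨x, hx, rfl⟩
  have hKpos : 0 < K :=
    lt_of_lt_of_le (div_pos (normW_pos D hD hCx) (normW_pos D hD hx)) hfK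
  have hby : normW D y ^ 2 = b := normW_sq D hD y
  have hbK : b ≤ K ^ 2 * n := by
    have h2 : normW D y ≤ K * normW D x := (div_le_iff₀ (normW_pos D hD hx)).mp hfK
    have h3 : normW D x ^ 2 = n := normW_sq D hD x
    nlinarith [normW_pos D hD hCx, normW_pos D hD hx]
  set s := Complex.normSq a with hsdef
  set γ : ℂ := (starRingEnd ℂ) a / ((b : ℝ) : ℂ) with hγdef
  have hb0 : ((b : ℝ) : ℂ) ≠ 0 := by exact_mod_cast hb.ne'
  have hxy : innerW D x y = (starRingEnd ℂ) a := (innerW_conj D hD.1 y x).symm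
  have hyy : innerW D y y = ((b : ℝ) : ℂ) :=
    (Complex.conj_eq_iff_re.mp (innerW_conj D hD.1 y y)).symm
  have hxx : innerW D x x = ((n : ℝ) : ℂ) :=
    (Complex.conj_eq_iff_re.mp (innerW_conj D hD.1 x x)).symm
  have hγc : (starRingEnd ℂ) γ = a / ((b : ℝ) : ℂ) := by
    rw [hγdef, map_div₀, Complex.conj_conj, Complex.conj_ofReal]
  have hs' : ((s : ℝ) : ℂ) = (starRingEnd ℂ) a * a := Complex.normSq_eq_conj_mul_self
  have hexp : innerW D (x - γ • y) (x - γ • y) = ((n - s / b : ℝ) : ℂ) := by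
    rw [innerW_sub_left, innerW_sub_right, innerW_sub_right, innerW_smul_left,
      innerW_smul_right, innerW_smul_left, innerW_smul_right, hxy, hyy, hxx, hγc, hγdef,
      ← hadef]
    push_cast
    field_simp
    linear_combination hs'
  refine ⟨γ, ?_⟩
  have hL : normW D (x - γ • y) ^ 2 = n - s / b := by
    rw [normW_sq D hD, hexp, Complex.ofReal_re]
  have hR : normW D x ^ 2 = n := normW_sq D hD x
  rw [hL, hR]
  have hsa : (δ * n) ^ 2 ≤ s := by
    have h5 : s = ‖a‖ ^ 2 := (Complex.sq_norm a).symm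
    have h7 := pow_le_pow_left₀ (by positivity) hδa 2
    rw [h5]; exact h7
  have key : δ ^ 2 * n * b ≤ s * K ^ 2 := by
    nlinarith [hδ, hn, hb, hKpos, hbK, hsa, sq_nonneg (δ*n)]
  have h6 : (δ / K) ^ 2 * n ≤ s / b := by
    rw [div_pow, div_mul_eq_mul_div, div_le_div_iff₀ (by positivity) hb]
    linarith [key]
  nlinarith [h6]
end
end

section
/- (Corollary 5.7 of the paper.) Let D ∈ ℂ^{N×N} be Hermitian positive definite, let C ∈ ℂ^{N×N}, and suppose ‖I − C‖_D ≤ α for some α ∈ [0, 1). Then dist(0, W_D(C)) ≥ 1 − α > 0 (so 0 ∉ W_D(C)) and ‖C‖_D ≤ 1 + α; consequently, with cos β := dist(0, W_D(C))/‖C‖_D and sin β := (1 − cos²β)^{1/2}, one has cos β ≥ (1−α)/(1+α) and sin β ≤ 2√α/(1+α). -/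
open scoped ComplexOrder

noncomputable section

section SqrtCompat

open scoped MatrixOrder

/-- Compatibility: the square root of a positive semidefinite matrix. -/
def Matrix.PosSemidef.sqrt {N : ℕ} {A : Matrix (Fin N) (Fin N) ℂ} (_ : A.PosSemidef) :
    Matrix (Fin N) (Fin N) ℂ := CFC.sqrt A

lemma Matrix.PosSemidef.posSemidef_sqrt {N : ℕ} {A : Matrix (Fin N) (Fin N) ℂ}
    (hA : A.PosSemidef) : hA.sqrt.PosSemidef :=
  Matrix.nonneg_iff_posSemidef.mp (CFC.sqrt_nonneg A)

lemma Matrix.PosSemidef.sqrt_mul_self {N : ℕ} {A : Matrix (Fin N) (Fin N) ℂ}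
    (hA : A.PosSemidef) : hA.sqrt * hA.sqrt = A :=
  CFC.sqrt_mul_sqrt_self A hA.nonneg

end SqrtCompat

namespace FovAux

open Matrix

variable {N : ℕ}

/-- Identify `Fin N → ℂ` with `EuclideanSpace ℂ (Fin N)`. -/
def eU {N : ℕ} (v : Fin N → ℂ) : EuclideanSpace ℂ (Fin N) := (WithLp.equiv 2 (Fin N → ℂ)).symm v

lemma inner2_eq (x y : Fin N → ℂ) : inner2 x y = inner ℂ (eU y) (eU x) := by
  rw [eU, eU, WithLp.equiv_symm_apply, EuclideanSpace.inner_toLp_toLp]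
  simp only [inner2, dotProduct, Pi.star_apply, RCLike.star_def]

lemma inner2_eq_dot (x y : Fin N → ℂ) : inner2 x y = x ⬝ᵥ star y := by
  simp [inner2, dotProduct]

variable {D : Matrix (Fin N) (Fin N) ℂ}

lemma sqrt_herm (hD : D.PosDef) : (hD.posSemidef.sqrt)ᴴ = hD.posSemidef.sqrt :=
  hD.posSemidef.posSemidef_sqrt.1

lemma sqrt_det_isUnit (hD : D.PosDef) : IsUnit (hD.posSemidef.sqrt).det := by
  have h : (hD.posSemidef.sqrt).det * (hD.posSemidef.sqrt).det = D.det := by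
    rw [← Matrix.det_mul, hD.posSemidef.sqrt_mul_self]
  have hDdet : D.det ≠ 0 := hD.det_pos.ne'
  exact isUnit_iff_ne_zero.2 fun h0 => hDdet (by rw [← h, h0, zero_mul])

lemma innerW_eq (hD : D.PosDef) (x y : Fin N → ℂ) :
    innerW D x y = inner2 (hD.posSemidef.sqrt *ᵥ x) (hD.posSemidef.sqrt *ᵥ y) := by
  set S := hD.posSemidef.sqrt with hS
  rw [innerW, inner2_eq_dot, inner2_eq_dot]
  have hDS : D = S * S := (hD.posSemidef.sqrt_mul_self).symm
  rw [hDS, ← Matrix.mulVec_mulVec]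
  rw [dotProduct_comm, Matrix.dotProduct_mulVec]
  have hsy : star y ᵥ* S = star (S *ᵥ y) := by
    rw [Matrix.star_mulVec, sqrt_herm hD]
  rw [hsy, dotProduct_comm]

lemma normW_eq (hD : D.PosDef) (x : Fin N → ℂ) :
    normW D x = ‖eU (hD.posSemidef.sqrt *ᵥ x)‖ := by
  rw [normW, innerW_eq hD, EuclideanSpace.norm_eq]
  congr 1
  simp only [inner2, Complex.mul_conj]
  rw [Complex.re_sum]
  refine Finset.sum_congr rfl fun i _ => ?_
  rw [Complex.ofReal_re, show eU (hD.posSemidef.sqrt *ᵥ x) i = (hD.posSemidef.sqrt *ᵥ x) i from rfl,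
    Complex.sq_norm]

lemma sqrt_mulVec_ne (hD : D.PosDef) {x : Fin N → ℂ} (hx : x ≠ 0) :
    hD.posSemidef.sqrt *ᵥ x ≠ 0 := by
  intro h0
  apply hx
  have hu := sqrt_det_isUnit hD
  calc x = (hD.posSemidef.sqrt⁻¹ * hD.posSemidef.sqrt) *ᵥ x := by
            rw [Matrix.nonsing_inv_mul _ hu, Matrix.one_mulVec]
    _ = hD.posSemidef.sqrt⁻¹ *ᵥ (hD.posSemidef.sqrt *ᵥ x) := by rw [Matrix.mulVec_mulVec]
    _ = 0 := by rw [h0, Matrix.mulVec_zero]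

lemma normW_pos (hD : D.PosDef) {x : Fin N → ℂ} (hx : x ≠ 0) : 0 < normW D x := by
  rw [normW_eq hD]
  have hne : eU (hD.posSemidef.sqrt *ᵥ x) ≠ 0 := by
    intro h0
    exact sqrt_mulVec_ne hD hx ((WithLp.equiv 2 (Fin N → ℂ)).symm.injective (by simpa [eU] using h0))
  exact norm_pos_iff.2 hne

lemma normW_nonneg (x : Fin N → ℂ) : 0 ≤ normW D x := Real.sqrt_nonneg _

lemma normW_zero (hD : D.PosDef) : normW D (0 : Fin N → ℂ) = 0 := by
  rw [normW_eq hD]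
  simp [eU, Matrix.mulVec_zero]

lemma normW_smul (hD : D.PosDef) (c : ℂ) (x : Fin N → ℂ) :
    normW D (c • x) = ‖c‖ * normW D x := by
  rw [normW_eq hD, normW_eq hD, Matrix.mulVec_smul]
  have he : eU (c • (hD.posSemidef.sqrt *ᵥ x)) = c • eU (hD.posSemidef.sqrt *ᵥ x) := rfl
  rw [he, norm_smul]

lemma normW_add_le (hD : D.PosDef) (x y : Fin N → ℂ) :
    normW D (x + y) ≤ normW D x + normW D y := by
  rw [normW_eq hD, normW_eq hD, normW_eq hD, Matrix.mulVec_add]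
  have he : eU (hD.posSemidef.sqrt *ᵥ x + hD.posSemidef.sqrt *ᵥ y)
      = eU (hD.posSemidef.sqrt *ᵥ x) + eU (hD.posSemidef.sqrt *ᵥ y) := rfl
  rw [he]
  exact norm_add_le _ _

lemma normW_sub_le (hD : D.PosDef) (x y : Fin N → ℂ) :
    normW D (x - y) ≤ normW D x + normW D y := by
  rw [normW_eq hD, normW_eq hD, normW_eq hD, Matrix.mulVec_sub]
  have he : eU (hD.posSemidef.sqrt *ᵥ x - hD.posSemidef.sqrt *ᵥ y)
      = eU (hD.posSemidef.sqrt *ᵥ x) - eU (hD.posSemidef.sqrt *ᵥ y) := rfl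
  rw [he]
  exact norm_sub_le _ _

lemma innerW_cs (hD : D.PosDef) (x y : Fin N → ℂ) :
    ‖innerW D x y‖ ≤ normW D x * normW D y := by
  rw [innerW_eq hD, inner2_eq, normW_eq hD, normW_eq hD]
  refine le_trans (norm_inner_le_norm _ _) ?_
  rw [mul_comm]

lemma innerW_self (hD : D.PosDef) (x : Fin N → ℂ) :
    innerW D x x = ((normW D x : ℝ) : ℂ) ^ 2 := by
  have h1 : innerW D x x = ((∑ i, Complex.normSq ((hD.posSemidef.sqrt *ᵥ x) i) : ℝ) : ℂ) := by
    rw [innerW_eq hD]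
    push_cast
    simp [inner2, Complex.mul_conj]
  rw [h1, normW_eq hD, ← Complex.ofReal_pow]
  congr 1
  rw [EuclideanSpace.norm_eq, Real.sq_sqrt (by positivity)]
  refine Finset.sum_congr rfl fun i _ => ?_
  rw [show eU (hD.posSemidef.sqrt *ᵥ x) i = (hD.posSemidef.sqrt *ᵥ x) i from rfl,
    Complex.sq_norm]

lemma innerW_sub_left (u v y : Fin N → ℂ) :
    innerW D (u - v) y = innerW D u y - innerW D v y := by
  simp [innerW, inner2, Matrix.mulVec_sub, sub_mul, Finset.sum_sub_distrib]

lemma ratio_bdd (hD : D.PosDef) (A : Matrix (Fin N) (Fin N) ℂ) :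
    BddAbove {t : ℝ | ∃ x : Fin N → ℂ, x ≠ 0 ∧ t = normW D (A.mulVec x) / normW D x} := by
  set S := hD.posSemidef.sqrt with hS
  set M := LinearMap.toContinuousLinearMap (Matrix.toEuclideanLin (S * A * S⁻¹)) with hM
  refine ⟨‖M‖, ?_⟩
  rintro t ⟨x, hx, rfl⟩
  have key : normW D (A *ᵥ x) ≤ ‖M‖ * normW D x := by
    have h1 : S *ᵥ (A *ᵥ x) = (S * A * S⁻¹) *ᵥ (S *ᵥ x) := by
      have hSS : (S * A * S⁻¹) * S = S * A := by
        rw [mul_assoc, Matrix.nonsing_inv_mul _ (sqrt_det_isUnit hD), mul_one]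
      rw [Matrix.mulVec_mulVec x (S * A * S⁻¹) S, hSS, ← Matrix.mulVec_mulVec]
    rw [normW_eq hD, normW_eq hD, h1]
    have h2 : eU ((S * A * S⁻¹) *ᵥ (S *ᵥ x)) = M (eU (S *ᵥ x)) := rfl
    rw [h2]
    exact M.le_opNorm _
  rw [div_le_iff₀ (normW_pos hD hx)]
  exact key

lemma le_opNormW (hD : D.PosDef) (A : Matrix (Fin N) (Fin N) ℂ) {x : Fin N → ℂ} (hx : x ≠ 0) :
    normW D (A.mulVec x) ≤ opNormW D A * normW D x := by
  have h1 : normW D (A.mulVec x) / normW D x ≤ opNormW D A :=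
    le_csSup (ratio_bdd hD A) ⟨x, hx, rfl⟩
  have h2 := mul_le_mul_of_nonneg_right h1 (normW_nonneg (D := D) x)
  rw [div_mul_cancel₀ _ (normW_pos hD hx).ne'] at h2
  exact h2

lemma opNormW_le (hD : D.PosDef) (hN : 1 ≤ N) (A : Matrix (Fin N) (Fin N) ℂ) {c : ℝ}
    (hall : ∀ x : Fin N → ℂ, x ≠ 0 → normW D (A.mulVec x) ≤ c * normW D x) :
    opNormW D A ≤ c := by
  have hx0 : (fun _ => 1 : Fin N → ℂ) ≠ 0 := by
    intro h
    have := congrFun h ⟨0, hN⟩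
    simp at this
  refine csSup_le ⟨_, ⟨_, hx0, rfl⟩⟩ ?_
  rintro t ⟨x, hx, rfl⟩
  rw [div_le_iff₀ (normW_pos hD hx)]
  exact hall x hx

end FovAux

open FovAux Matrix in
/-- **Corollary 5.7**: field-of-values bounds from `‖I - C‖_D ≤ α`. -/
theorem fov_bounds_from_nearby_identity {N : ℕ} (hN : 1 ≤ N)
    (D C : Matrix (Fin N) (Fin N) ℂ) (hD : D.PosDef)
    (α : ℝ) (hα0 : 0 ≤ α) (hα1 : α < 1)
    (h : opNormW D (1 - C) ≤ α) :
    1 - α ≤ Metric.infDist (0 : ℂ) (numRange D C) ∧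
    (0 : ℂ) ∉ numRange D C ∧
    opNormW D C ≤ 1 + α ∧
    (1 - α) / (1 + α) ≤ Metric.infDist (0 : ℂ) (numRange D C) / opNormW D C ∧
    Real.sqrt (1 - (Metric.infDist (0 : ℂ) (numRange D C) / opNormW D C) ^ 2) ≤
      2 * Real.sqrt α / (1 + α) := by
  have hx0 : (fun _ => 1 : Fin N → ℂ) ≠ 0 := by
    intro h
    have := congrFun h ⟨0, hN⟩
    simp at this
  -- every element of the numerical range is at distance ≥ 1 - α from 0
  have hb : ∀ z ∈ numRange D C, 1 - α ≤ dist (0 : ℂ) z := by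
    rintro z ⟨x, hx1, rfl⟩
    have hxne : x ≠ 0 := by
      intro h0
      rw [h0, normW_zero hD] at hx1
      norm_num at hx1
    have hIxx : innerW D x x = 1 := by
      rw [innerW_self hD, hx1]; norm_num
    have hsub : innerW D ((1 - C).mulVec x) x = 1 - innerW D (C.mulVec x) x := by
      rw [Matrix.sub_mulVec, Matrix.one_mulVec, innerW_sub_left, hIxx]
    have hle : ‖(1 : ℂ) - innerW D (C.mulVec x) x‖ ≤ α := by
      rw [← hsub]
      calc ‖innerW D ((1 - C).mulVec x) x‖ ≤ normW D ((1 - C).mulVec x) * normW D x :=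
            innerW_cs hD _ _
        _ ≤ (opNormW D (1 - C) * normW D x) * normW D x :=
            mul_le_mul_of_nonneg_right (le_opNormW hD _ hxne) (normW_nonneg x)
        _ = opNormW D (1 - C) := by rw [hx1]; ring
        _ ≤ α := h
    have := norm_sub_norm_le (1 : ℂ) ((1 : ℂ) - innerW D (C.mulVec x) x)
    rw [dist_zero_left]
    simp only [norm_one, sub_sub_cancel] at this
    linarith
  -- the numerical range is nonempty
  have hne : (numRange D C).Nonempty := by
    set r := normW D (fun _ => 1 : Fin N → ℂ) with hr
    have hrpos : 0 < r := normW_pos hD hx0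
    set x : Fin N → ℂ := ((r : ℂ)⁻¹) • (fun _ => 1 : Fin N → ℂ) with hx
    have hx1 : normW D x = 1 := by
      rw [hx, normW_smul hD]
      rw [norm_inv, Complex.norm_real, Real.norm_eq_abs, abs_of_pos hrpos, ← hr]
      field_simp
    exact ⟨innerW D (C.mulVec x) x, ⟨x, hx1, rfl⟩⟩
  have h1 : 1 - α ≤ Metric.infDist (0 : ℂ) (numRange D C) := by
    by_contra hcon
    push_neg at hcon
    obtain ⟨z, hz, hzd⟩ := (Metric.infDist_lt_iff hne).1 hcon
    exact absurd (hb z hz) (not_le.2 hzd)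
  have h0 : (0 : ℂ) ∉ numRange D C := by
    intro hz
    have := hb 0 hz
    simp at this
    linarith
  -- opNormW D C ≤ 1 + α
  have hC_le : opNormW D C ≤ 1 + α := by
    refine opNormW_le hD hN C ?_
    intro x hx
    have h2 : C.mulVec x = x - (1 - C).mulVec x := by
      rw [Matrix.sub_mulVec, Matrix.one_mulVec]; ring_nf
    calc normW D (C.mulVec x) = normW D (x - (1 - C).mulVec x) := by rw [← h2]
      _ ≤ normW D x + normW D ((1 - C).mulVec x) := normW_sub_le hD _ _
      _ ≤ normW D x + opNormW D (1 - C) * normW D x :=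
          (add_le_add_iff_left _).2 (le_opNormW hD _ hx)
      _ ≤ normW D x + α * normW D x := by
          have := mul_le_mul_of_nonneg_right h (normW_nonneg (D := D) x)
          linarith
      _ = (1 + α) * normW D x := by ring
  -- opNormW D C > 0
  have hC_pos : 0 < opNormW D C := by
    have hxpos : 0 < normW D (fun _ => 1 : Fin N → ℂ) := normW_pos hD hx0
    have hlow : (1 - α) * normW D (fun _ => 1 : Fin N → ℂ)
        ≤ normW D (C.mulVec (fun _ => 1 : Fin N → ℂ)) := by
      have hdecomp : (fun _ => 1 : Fin N → ℂ) = C.mulVec (fun _ => 1) + (1 - C).mulVec (fun _ => 1) := by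
        rw [Matrix.sub_mulVec, Matrix.one_mulVec]; ring_nf
      have htri : normW D (fun _ => 1 : Fin N → ℂ)
          ≤ normW D (C.mulVec (fun _ => 1)) + normW D ((1 - C).mulVec (fun _ => 1)) := by
        conv_lhs => rw [hdecomp]
        exact normW_add_le hD _ _
      have hb2 : normW D ((1 - C).mulVec (fun _ => 1 : Fin N → ℂ))
          ≤ α * normW D (fun _ => 1 : Fin N → ℂ) := by
        have := le_opNormW hD (1 - C) hx0
        have h3 := mul_le_mul_of_nonneg_right h (normW_nonneg (D := D) (fun _ => 1 : Fin N → ℂ))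
        linarith
      linarith
    have hratio : 1 - α ≤ normW D (C.mulVec (fun _ => 1 : Fin N → ℂ)) / normW D (fun _ => 1) := by
      rw [le_div_iff₀ hxpos]
      exact hlow
    have hsup : normW D (C.mulVec (fun _ => 1 : Fin N → ℂ)) / normW D (fun _ => 1)
        ≤ opNormW D C := le_csSup (ratio_bdd hD C) ⟨_, hx0, rfl⟩
    linarith
  refine ⟨h1, h0, hC_le, ?_, ?_⟩
  · rw [div_le_div_iff₀ (by linarith) hC_pos]
    nlinarith [Metric.infDist_nonneg (x := (0 : ℂ)) (s := numRange D C)]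
  · set d := Metric.infDist (0 : ℂ) (numRange D C)
    set t := d / opNormW D C with ht
    have htlow : (1 - α) / (1 + α) ≤ t := by
      rw [ht, div_le_div_iff₀ (by linarith) hC_pos]
      nlinarith
    have htnn : 0 ≤ (1 - α) / (1 + α) := div_nonneg (by linarith) (by linarith)
    have hsq : ((1 - α) / (1 + α)) ^ 2 ≤ t ^ 2 := pow_le_pow_left₀ htnn htlow 2
    have hkey : 1 - t ^ 2 ≤ 4 * α / (1 + α) ^ 2 := by
      have hden : (0 : ℝ) < (1 + α) ^ 2 := by positivity
      have : ((1 - α) / (1 + α)) ^ 2 = (1 - α) ^ 2 / (1 + α) ^ 2 := by rw [div_pow]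
      rw [this] at hsq
      rw [div_le_iff₀ hden] at hsq
      rw [le_div_iff₀ hden]
      nlinarith
    calc Real.sqrt (1 - t ^ 2) ≤ Real.sqrt (4 * α / (1 + α) ^ 2) := Real.sqrt_le_sqrt hkey
      _ = 2 * Real.sqrt α / (1 + α) := by
          rw [show 4 * α / (1 + α) ^ 2 = (2 * Real.sqrt α / (1 + α)) ^ 2 by
            rw [div_pow, mul_pow, Real.sq_sqrt hα0]; norm_num]
          exact Real.sqrt_sq (by positivity)
end
end

section
/- (Error bound for weighted GMRES; the linear-algebra core of Theorems 2.2 and 2.9 of the paper.) Let D ∈ ℂ^{N×N} be Hermitian positive definite and let C ∈ ℂ^{N×N} satisfy ‖I − C‖_D ≤ 1/2. Then C is invertible with ‖C‖_D ≤ 3/2 and ‖C⁻¹‖_D ≤ 2, and for every d ∈ ℂ^N, with u := C⁻¹ d and zero initial guess (x⁰ = 0, so r⁰ = −d), every m ∈ ℕ and every minimizer x^m of ‖C x − d‖_D over x ∈ K^m(C, d) satisfy ‖x^m − u‖_D ≤ 3 · (2√2/3)^m · ‖u‖_D. -/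
open scoped ComplexOrder

noncomputable section

section helpers

variable {N : ℕ} {D : Matrix (Fin N) (Fin N) ℂ}

/-- A type synonym for `Fin N → ℂ` carrying the `D`-weighted norm. -/
def VD {N : ℕ} (_D : Matrix (Fin N) (Fin N) ℂ) : Type := Fin N → ℂ

lemma normW_eq_norm (hD : D.PosDef) (x : Fin N → ℂ) :
    normW D x = @norm _ (Matrix.toNormedAddCommGroup D hD).toNorm x := by
  have h2 : @norm _ (Matrix.toNormedAddCommGroup D hD).toNorm x
      = Real.sqrt (Complex.re (dotProduct (D.mulVec x) (star x))) := rfl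
  rw [h2, normW]
  congr 1

lemma normW_nonneg (x : Fin N → ℂ) : 0 ≤ normW D x := Real.sqrt_nonneg _

lemma normW_zero_iff (hD : D.PosDef) (x : Fin N → ℂ) : normW D x = 0 ↔ x = 0 := by
  rw [normW_eq_norm hD]
  exact @norm_eq_zero _
    (@NormedAddCommGroup.toNormedAddGroup _ (Matrix.toNormedAddCommGroup D hD)) x

lemma normW_pos (hD : D.PosDef) {x : Fin N → ℂ} (hx : x ≠ 0) : 0 < normW D x :=
  lt_of_le_of_ne (normW_nonneg x) (fun e => hx ((normW_zero_iff hD x).mp e.symm))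

lemma normW_add_le (hD : D.PosDef) (x y : Fin N → ℂ) :
    normW D (x + y) ≤ normW D x + normW D y := by
  rw [normW_eq_norm hD, normW_eq_norm hD, normW_eq_norm hD]
  exact @norm_add_le _
    ((Matrix.toNormedAddCommGroup D hD).toSeminormedAddCommGroup).toSeminormedAddGroup x y

lemma normW_neg (hD : D.PosDef) (x : Fin N → ℂ) : normW D (-x) = normW D x := by
  rw [normW_eq_norm hD, normW_eq_norm hD]
  exact @norm_neg _
    ((Matrix.toNormedAddCommGroup D hD).toSeminormedAddCommGroup).toSeminormedAddGroup x

lemma sum_mulVec {ι : Type*} (s : Finset ι) (f : ι → Matrix (Fin N) (Fin N) ℂ)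
    (d : Fin N → ℂ) : (∑ i ∈ s, f i).mulVec d = ∑ i ∈ s, (f i).mulVec d := by
  classical
  induction s using Finset.cons_induction with
  | empty => simp
  | cons a s ha ih => rw [Finset.sum_cons, Finset.sum_cons, Matrix.add_mulVec, ih]

/-- There is a global bound for `C` in the weighted norm. -/
lemma exists_bound (hD : D.PosDef) (C : Matrix (Fin N) (Fin N) ℂ) :
    ∃ K : ℝ, 0 ≤ K ∧ ∀ x, normW D (C.mulVec x) ≤ K * normW D x := by
  letI I : NormedAddCommGroup (VD D) := Matrix.toNormedAddCommGroup D hD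
  letI I2 : InnerProductSpace ℂ (VD D) := Matrix.toInnerProductSpace D hD.posSemidef
  letI I3 : NormedSpace ℂ (VD D) := I2.toNormedSpace
  letI I4 : FiniteDimensional ℂ (VD D) :=
    (inferInstanceAs (FiniteDimensional ℂ (Fin N → ℂ)) : FiniteDimensional ℂ (Fin N → ℂ))
  let f : VD D →ₗ[ℂ] VD D := C.mulVecLin
  let g : VD D →L[ℂ] VD D := LinearMap.toContinuousLinearMap f
  refine ⟨‖g‖, norm_nonneg g, fun x => ?_⟩
  have e1 : normW D (C.mulVec x) = ‖g x‖ := normW_eq_norm hD (C.mulVec x)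
  have e2 : normW D x = ‖(show VD D from x)‖ := normW_eq_norm hD x
  rw [e1, e2]
  exact g.le_opNorm x

lemma opNormW_le_iff (hD : D.PosDef) (C : Matrix (Fin N) (Fin N) ℂ) {a : ℝ} (ha : 0 ≤ a) :
    opNormW D C ≤ a ↔ ∀ x, normW D (C.mulVec x) ≤ a * normW D x := by
  constructor
  · intro hle x
    by_cases hx : x = 0
    · subst hx
      simp only [Matrix.mulVec_zero]
      rw [(normW_zero_iff hD 0).mpr rfl]
      simp
    · obtain ⟨K, hK0, hK⟩ := exists_bound hD C
      have hbdd : BddAbove {t : ℝ | ∃ x : Fin N → ℂ, x ≠ 0 ∧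
          t = normW D (C.mulVec x) / normW D x} := by
        refine ⟨K, fun t ht => ?_⟩
        obtain ⟨y, hy, rfl⟩ := ht
        rw [div_le_iff₀ (normW_pos hD hy)]
        exact hK y
      have hmem : normW D (C.mulVec x) / normW D x ∈ {t : ℝ | ∃ x : Fin N → ℂ, x ≠ 0 ∧
          t = normW D (C.mulVec x) / normW D x} := ⟨x, hx, rfl⟩
      have := le_trans (le_csSup hbdd hmem) hle
      rw [div_le_iff₀ (normW_pos hD hx)] at this
      linarith
  · intro hb
    refine Real.sSup_le (fun t ht => ?_) ha
    obtain ⟨y, hy, rfl⟩ := ht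
    rw [div_le_iff₀ (normW_pos hD hy)]
    exact hb y

lemma aeval_mem_krylov (C : Matrix (Fin N) (Fin N) ℂ) (d : Fin N → ℂ) {m : ℕ}
    (p : Polynomial ℂ) (hp : p.natDegree < m) :
    ((Polynomial.aeval C) p).mulVec d ∈ krylov C d m := by
  rw [Polynomial.aeval_eq_sum_range' hp]
  have : (∑ i ∈ Finset.range m, p.coeff i • C ^ i).mulVec d
      = ∑ i ∈ Finset.range m, p.coeff i • ((C ^ i).mulVec d) := by
    rw [sum_mulVec]
    simp [Matrix.smul_mulVec]
  rw [this]
  refine Submodule.sum_mem _ (fun i hi => ?_)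
  exact Submodule.smul_mem _ _
    (Submodule.subset_span ⟨i, Finset.mem_range.mp hi, rfl⟩)

end helpers

/-- **Error bound for weighted GMRES** (linear-algebra core of Theorems 2.2 and 2.9). -/
theorem error_bound_weighted_GMRES {N : ℕ} (hN : 1 ≤ N)
    (D C : Matrix (Fin N) (Fin N) ℂ) (hD : D.PosDef)
    (h : opNormW D (1 - C) ≤ 1 / 2) :
    IsUnit C ∧ opNormW D C ≤ 3 / 2 ∧ opNormW D C⁻¹ ≤ 2 ∧
    ∀ (d : Fin N → ℂ) (m : ℕ) (xm : Fin N → ℂ),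
      xm ∈ krylov C d m →
      (∀ x ∈ krylov C d m, normW D (C.mulVec xm - d) ≤ normW D (C.mulVec x - d)) →
      normW D (xm - C⁻¹.mulVec d) ≤
        3 * (2 * Real.sqrt 2 / 3) ^ m * normW D (C⁻¹.mulVec d) := by
  have hB : ∀ x, normW D ((1 - C).mulVec x) ≤ (1 / 2) * normW D x :=
    (opNormW_le_iff hD (1 - C) (by norm_num)).mp h
  -- pointwise bound for C
  have hCpt : ∀ x, normW D (C.mulVec x) ≤ (3 / 2) * normW D x := by
    intro x
    have hx : C.mulVec x = x + (-(((1 : Matrix (Fin N) (Fin N) ℂ) - C).mulVec x)) := by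
      rw [Matrix.sub_mulVec, Matrix.one_mulVec]; abel
    calc normW D (C.mulVec x)
        = normW D (x + (-(((1 : Matrix (Fin N) (Fin N) ℂ) - C).mulVec x))) := by rw [← hx]
      _ ≤ normW D x + normW D (-(((1 : Matrix (Fin N) (Fin N) ℂ) - C).mulVec x)) :=
          normW_add_le hD _ _
      _ = normW D x + normW D (((1 : Matrix (Fin N) (Fin N) ℂ) - C).mulVec x) := by
          rw [normW_neg hD]
      _ ≤ normW D x + (1 / 2) * normW D x := by linarith [hB x]
      _ = (3 / 2) * normW D x := by ring
  -- C is injective hence a unit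
  have hinj : Function.Injective C.mulVec := by
    intro x y hxy
    have hz : C.mulVec (x - y) = 0 := by
      rw [Matrix.mulVec_sub, hxy, sub_self]
    have h1 : ((1 : Matrix (Fin N) (Fin N) ℂ) - C).mulVec (x - y) = x - y := by
      rw [Matrix.sub_mulVec, Matrix.one_mulVec, hz, sub_zero]
    have h2 := hB (x - y)
    rw [h1] at h2
    have h3 : normW D (x - y) = 0 := by
      nlinarith [normW_nonneg (D := D) (x - y)]
    exact sub_eq_zero.mp ((normW_zero_iff hD (x - y)).mp h3)
  have hunit : IsUnit C := Matrix.mulVec_injective_iff_isUnit.mp hinj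
  have hdet : IsUnit C.det := (Matrix.isUnit_iff_isUnit_det C).mp hunit
  have hCCinv : C * C⁻¹ = 1 := Matrix.mul_nonsing_inv C hdet
  have hCinvC : C⁻¹ * C = 1 := Matrix.nonsing_inv_mul C hdet
  -- pointwise bound for C⁻¹
  have hCinvpt : ∀ y, normW D (C⁻¹.mulVec y) ≤ 2 * normW D y := by
    intro y
    set x := C⁻¹.mulVec y with hxdef
    have hy : C.mulVec x = y := by
      rw [hxdef, Matrix.mulVec_mulVec, hCCinv, Matrix.one_mulVec]
    have hx : x = ((1 : Matrix (Fin N) (Fin N) ℂ) - C).mulVec x + C.mulVec x := by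
      rw [Matrix.sub_mulVec, Matrix.one_mulVec]; abel
    have h1 : normW D x ≤ normW D (((1 : Matrix (Fin N) (Fin N) ℂ) - C).mulVec x)
        + normW D (C.mulVec x) := by
      calc normW D x
          = normW D (((1 : Matrix (Fin N) (Fin N) ℂ) - C).mulVec x + C.mulVec x) := by
            rw [← hx]
        _ ≤ _ := normW_add_le hD _ _
    have h2 := hB x
    rw [hy] at h1
    linarith
  refine ⟨hunit, (opNormW_le_iff hD C (by norm_num)).mpr hCpt,
    (opNormW_le_iff hD C⁻¹ (by norm_num)).mpr hCinvpt, ?_⟩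
  intro d m xm hxm hmin
  set B := (1 : Matrix (Fin N) (Fin N) ℂ) - C with hBdef
  set u := C⁻¹.mulVec d with hudef
  have hdu : C.mulVec u = d := by
    rw [hudef, Matrix.mulVec_mulVec, hCCinv, Matrix.one_mulVec]
  -- powers of B
  have hBpow : ∀ (k : ℕ) (x : Fin N → ℂ),
      normW D ((B ^ k).mulVec x) ≤ (1 / 2) ^ k * normW D x := by
    intro k
    induction k with
    | zero => intro x; simp [Matrix.one_mulVec]
    | succ n ih =>
      intro x
      have he : (B ^ (n + 1)).mulVec x = B.mulVec ((B ^ n).mulVec x) := by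
        rw [Matrix.mulVec_mulVec, ← pow_succ']
      rw [he]
      calc normW D (B.mulVec ((B ^ n).mulVec x))
          ≤ (1 / 2) * normW D ((B ^ n).mulVec x) := hB _
        _ ≤ (1 / 2) * ((1 / 2) ^ n * normW D x) := by
            have := ih x
            nlinarith [normW_nonneg (D := D) ((B ^ n).mulVec x)]
        _ = (1 / 2) ^ (n + 1) * normW D x := by ring
  -- the candidate vector in the Krylov space
  set S := ∑ j ∈ Finset.range m, B ^ j with hSdef
  have hcand : (S.mulVec d) ∈ krylov C d m := by
    have hsum : S.mulVec d = ∑ j ∈ Finset.range m, (B ^ j).mulVec d := by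
      rw [hSdef, sum_mulVec]
    rw [hsum]
    refine Submodule.sum_mem _ (fun j hj => ?_)
    have hj' := Finset.mem_range.mp hj
    have hpoly : ((Polynomial.aeval C) ((1 - Polynomial.X : Polynomial ℂ) ^ j)) = B ^ j := by
      simp [hBdef]
    have hdeg : ((1 - Polynomial.X : Polynomial ℂ) ^ j).natDegree < m := by
      calc ((1 - Polynomial.X : Polynomial ℂ) ^ j).natDegree
          ≤ j * (1 - Polynomial.X : Polynomial ℂ).natDegree := Polynomial.natDegree_pow_le
        _ ≤ j * 1 := by
            refine Nat.mul_le_mul_left _ ?_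
            calc (1 - Polynomial.X : Polynomial ℂ).natDegree
                ≤ max (1 : Polynomial ℂ).natDegree (Polynomial.X : Polynomial ℂ).natDegree :=
                  Polynomial.natDegree_sub_le _ _
              _ ≤ 1 := by simp
        _ < m := by omega
    have := aeval_mem_krylov C d _ hdeg
    rwa [hpoly] at this
  -- residual of the candidate
  have hCS : C * S = 1 - B ^ m := by
    have h1 : C = 1 - B := by rw [hBdef, sub_sub_cancel]
    have h2 : (B - 1) * S = B ^ m - 1 := by
      have := mul_geom_sum (x := B) m
      simpa [hSdef] using this
    have h3 : (1 - B) * S = -((B - 1) * S) := by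
      rw [← neg_mul, neg_sub]
    rw [h1, h3, h2, neg_sub]
  have hres : C.mulVec (S.mulVec d) - d = -((B ^ m).mulVec d) := by
    rw [Matrix.mulVec_mulVec, hCS, Matrix.sub_mulVec, Matrix.one_mulVec]
    abel
  have hresbound : normW D (C.mulVec (S.mulVec d) - d) ≤ (1 / 2) ^ m * normW D d := by
    rw [hres, normW_neg hD]
    exact hBpow m d
  -- chain of inequalities
  have hkey : xm - u = C⁻¹.mulVec (C.mulVec xm - d) := by
    rw [Matrix.mulVec_sub, Matrix.mulVec_mulVec, hCinvC, Matrix.one_mulVec, hudef]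
  have hd_le : normW D d ≤ (3 / 2) * normW D u := by
    have := hCpt u
    rwa [hdu] at this
  have main : normW D (xm - u) ≤ 3 * (1 / 2) ^ m * normW D u := by
    calc normW D (xm - u) = normW D (C⁻¹.mulVec (C.mulVec xm - d)) := by rw [hkey]
      _ ≤ 2 * normW D (C.mulVec xm - d) := hCinvpt _
      _ ≤ 2 * normW D (C.mulVec (S.mulVec d) - d) := by
          have := hmin _ hcand
          linarith
      _ ≤ 2 * ((1 / 2) ^ m * normW D d) := by linarith
      _ ≤ 2 * ((1 / 2) ^ m * ((3 / 2) * normW D u)) := by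
          have hp : (0:ℝ) ≤ (1 / 2) ^ m := by positivity
          nlinarith
      _ = 3 * (1 / 2) ^ m * normW D u := by ring
  have hfac : ((1 : ℝ) / 2) ^ m ≤ (2 * Real.sqrt 2 / 3) ^ m := by
    refine pow_le_pow_left₀ (by norm_num) ?_ m
    have h2 : (1 : ℝ) ≤ Real.sqrt 2 := by
      rw [show (1:ℝ) = Real.sqrt 1 by simp]
      exact Real.sqrt_le_sqrt (by norm_num)
    nlinarith
  have hfin := mul_le_mul_of_nonneg_right hfac (normW_nonneg (D := D) u)
  calc normW D (xm - u) ≤ 3 * (1 / 2) ^ m * normW D u := main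
    _ ≤ 3 * (2 * Real.sqrt 2 / 3) ^ m * normW D u := by nlinarith
end
end

section
/- (Abstract form of Lemma 5.4, 'bound for data in the dual space', carrying exactly the hypotheses used in its proof.) Let V be a normed complex vector space with norm ‖·‖, let ⟨·,·⟩₀ be a positive-semidefinite Hermitian sesquilinear form on V with associated seminorm ‖v‖₀ := ⟨v,v⟩₀^{1/2}, and let k > 0 satisfy k‖v‖₀ ≤ ‖v‖ for all v ∈ V. Let a : V × V → ℂ be a sesquilinear form, and let constants A_min > 0, 0 < n_min ≤ n_max, C_bound ≥ 0 be such that: (Gårding inequality) Re a(v,v) ≥ min{A_min, n_min}·‖v‖² − 2k²n_max·‖v‖₀² for all v ∈ V. Let u ∈ V, M ≥ 0, and F : V → ℂ be such that a(u,v) = F(v) for all v ∈ V and |F(v)| ≤ M‖v‖ for all v ∈ V, and assume (adjoint solvability with the nontrapping bound) there exists w ∈ V with a(v,w) = ⟨v,u⟩₀ for all v ∈ V and ‖w‖ ≤ C_bound·‖u‖₀. Then ‖u‖ ≤ (1/min{A_min, n_min})·(1 + 2 C_bound n_max k)·M. -/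
noncomputable section

/-- **Abstract form of Lemma 5.4** ("bound for data in the dual space"), carrying exactly
the hypotheses used in its proof. Here `binner` is a positive-semidefinite Hermitian
sesquilinear form with associated seminorm `‖v‖₀ = √(Re ⟨v,v⟩₀)`, and `a` is a
sesquilinear form satisfying a Gårding inequality. -/
theorem abstract_dual_data_bound
    {V : Type*} [NormedAddCommGroup V] [NormedSpace ℂ V]
    (binner : V → V → ℂ)
    (hb_add : ∀ x y v : V, binner (x + y) v = binner x v + binner y v)
    (hb_smul : ∀ (c : ℂ) (x v : V), binner (c • x) v = c * binner x v)
    (hb_herm : ∀ x y : V, binner x y = (starRingEnd ℂ) (binner y x))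
    (hb_pos : ∀ v : V, 0 ≤ (binner v v).re)
    (k : ℝ) (hk : 0 < k)
    (hk0 : ∀ v : V, k * Real.sqrt (binner v v).re ≤ ‖v‖)
    (a : V → V → ℂ)
    (ha_add1 : ∀ x y v : V, a (x + y) v = a x v + a y v)
    (ha_smul1 : ∀ (c : ℂ) (x v : V), a (c • x) v = c * a x v)
    (ha_add2 : ∀ x v w : V, a x (v + w) = a x v + a x w)
    (ha_smul2 : ∀ (c : ℂ) (x v : V), a x (c • v) = (starRingEnd ℂ) c * a x v)
    (Amin nmin nmax Cbound : ℝ)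
    (hAmin : 0 < Amin) (hnmin : 0 < nmin) (hnn : nmin ≤ nmax) (hCb : 0 ≤ Cbound)
    (hGarding : ∀ v : V,
      min Amin nmin * ‖v‖ ^ 2 - 2 * k ^ 2 * nmax * (binner v v).re ≤ (a v v).re)
    (u : V) (M : ℝ) (hM : 0 ≤ M) (F : V → ℂ)
    (hu : ∀ v : V, a u v = F v)
    (hF : ∀ v : V, ‖F v‖ ≤ M * ‖v‖)
    (w : V)
    (hw : ∀ v : V, a v w = binner v u)
    (hwb : ‖w‖ ≤ Cbound * Real.sqrt (binner u u).re) :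
    ‖u‖ ≤ (1 / min Amin nmin) * (1 + 2 * Cbound * nmax * k) * M := by
  have hm : 0 < min Amin nmin := lt_min hAmin hnmin
  have hnmax : 0 < nmax := lt_of_lt_of_le hnmin hnn
  set s := Real.sqrt (binner u u).re with hs
  have hsnn : 0 ≤ s := Real.sqrt_nonneg _
  have hs2 : s ^ 2 = (binner u u).re := Real.sq_sqrt (hb_pos u)
  have h1 : (a u u).re ≤ M * ‖u‖ := by
    rw [hu]
    exact (Complex.re_le_norm _).trans (hF u)
  have hbF : binner u u = F w := by rw [← hw u, hu]
  have h2 : (binner u u).re ≤ M * (Cbound * s) := by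
    rw [hbF]
    exact (Complex.re_le_norm _).trans ((hF w).trans (mul_le_mul_of_nonneg_left hwb hM))
  have hks : k * s ≤ ‖u‖ := hk0 u
  have hG := hGarding u
  have main : min Amin nmin * ‖u‖ ^ 2 ≤ (1 + 2 * Cbound * nmax * k) * M * ‖u‖ := by
    have h2' : 2 * k ^ 2 * nmax * (binner u u).re
        ≤ 2 * k ^ 2 * nmax * (M * (Cbound * s)) :=
      mul_le_mul_of_nonneg_left h2 (by positivity)
    have h3 : 2 * k ^ 2 * nmax * (M * (Cbound * s))
        = (2 * k * nmax * M * Cbound) * (k * s) := by ring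
    have h4 : (2 * k * nmax * M * Cbound) * (k * s)
        ≤ (2 * k * nmax * M * Cbound) * ‖u‖ :=
      mul_le_mul_of_nonneg_left hks (by positivity)
    nlinarith [hG, h1, h2', h4]
  rcases eq_or_lt_of_le (norm_nonneg u) with h0 | h0
  · rw [← h0]
    positivity
  · rw [div_mul_eq_mul_div, div_mul_eq_mul_div, one_mul, le_div_iff₀ hm]
    have := (mul_le_mul_iff_right₀ h0).mpr (le_refl (1 : ℝ))
    nlinarith [main, h0]
end
end
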